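/- For every finite binary tree G (every vertex has at most 2 children after rooting at a vertex of degree ≤ 2), there exists a category system S such that (G,S) is shattered and internally connected and memdim(S) = O(diam(G)^2). Concretely, memdim(S) ≤ c · (diam(G)+1)^2 for an absolute constant c. -/

import Mathlib

open Finset SimpleGraph

variable {V : Type*}

/-- The set of categories that `x` belongs to. -/
def cat [DecidableEq V] (S : Finset (Finset V)) (x : V) : Finset (Finset V) :=
  S.filter (fun C => x ∈ C)

/-- The category-based distance `d(s,t) = |cat(t) \ cat(s)|`. -/
def dd [DecidableEq V] (S : Finset (Finset V)) (s t : V) : ℕ :=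
  (cat S t \ cat S s).card

/-- `(G, S)` is shattered. -/
def Shattered [DecidableEq V] (G : SimpleGraph V) (S : Finset (Finset V)) : Prop :=
  ∀ s t : V, s ≠ t → ∃ u, G.Adj s u ∧ ∃ C ∈ S, u ∈ C ∧ t ∈ C ∧ s ∉ C

/-- `(G, S)` is internally connected: every category induces a connected subgraph. -/
def InternallyConnected (G : SimpleGraph V) (S : Finset (Finset V)) : Prop :=
  ∀ C ∈ S, (G.induce (C : Set V)).Preconnected

/-- Greedy routing can reach `t` from `s`: there is a path along which the
category distance to `t` strictly decreases at every step. -/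
def RoutesTo [DecidableEq V] (G : SimpleGraph V) (S : Finset (Finset V)) (s t : V) : Prop :=
  Relation.ReflTransGen (fun a b => G.Adj a b ∧ dd S b t < dd S a t) s t

/-- Greedy routing works between all pairs of vertices. -/
def RoutingWorks [DecidableEq V] (G : SimpleGraph V) (S : Finset (Finset V)) : Prop :=
  ∀ s t : V, s ≠ t → RoutesTo G S s t

/-- The membership dimension of a category system. -/
def memdim [DecidableEq V] [Fintype V] (S : Finset (Finset V)) : ℕ :=
  Finset.univ.sup fun u => (cat S u).card



namespace BTC

variable {V : Type} {G : SimpleGraph V}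

lemma path_eq (ht : G.IsTree) {u v : V} {p q : G.Walk u v} (hp : p.IsPath) (hq : q.IsPath) :
    p = q :=
  (ht.existsUnique_path u v).unique hp hq

lemma dist_split (hc : G.Connected) {x z y : V} (p : G.Walk x z) (hl : p.length = G.dist x z)
    (hy : y ∈ p.support) : G.dist x y + G.dist y z = G.dist x z := by
  classical
  have h1 : G.dist x y ≤ (p.takeUntil y hy).length := dist_le _
  have h2 : G.dist y z ≤ (p.dropUntil y hy).length := dist_le _
  have h3 : (p.takeUntil y hy).length + (p.dropUntil y hy).length = p.length := by
    have := congrArg Walk.length (p.take_spec hy)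
    rwa [Walk.length_append] at this
  have h4 : G.dist x z ≤ G.dist x y + G.dist y z := hc.dist_triangle
  omega

lemma mem_support_of_dist (ht : G.IsTree) {x z y : V}
    (h : G.dist x y + G.dist y z = G.dist x z) {p : G.Walk x z} (hp : p.IsPath) :
    y ∈ p.support := by
  have hc := ht.isConnected
  obtain ⟨q1, hq1⟩ := hc.exists_walk_length_eq_dist x y
  obtain ⟨q2, hq2⟩ := hc.exists_walk_length_eq_dist y z
  have hlen : (q1.append q2).length = G.dist x z := by
    rw [Walk.length_append, hq1, hq2, h]
  have hpath : (q1.append q2).IsPath := Walk.isPath_of_length_eq_dist _ hlen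
  have : q1.append q2 = p := path_eq ht hpath hp
  rw [← this, Walk.mem_support_append_iff]
  exact Or.inl (q1.end_mem_support)

lemma path_length_eq_dist (ht : G.IsTree) {x z : V} {p : G.Walk x z} (hp : p.IsPath) :
    p.length = G.dist x z := by
  obtain ⟨q, hq, hql⟩ := ht.isConnected.exists_path_of_dist x z
  rw [path_eq ht hp hq]; exact hql

lemma first_step (hc : G.Connected) {s t : V} (h : s ≠ t) :
    ∃ u, G.Adj s u ∧ G.dist u t + 1 = G.dist s t := by
  have hpos : 0 < G.dist s t := hc.pos_dist_of_ne h
  obtain ⟨p, hl⟩ := hc.exists_walk_length_eq_dist s t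
  cases p with
  | nil => simp at hl; rw [SimpleGraph.dist_self] at hpos; omega
  | cons hadj q =>
    rename_i u
    refine ⟨u, hadj, ?_⟩
    have h1 : G.dist u t ≤ q.length := dist_le _
    have h2 : G.dist s u ≤ 1 := by
      have := dist_le hadj.toWalk
      simpa using this
    have h3 : G.dist s t ≤ G.dist s u + G.dist u t := hc.dist_triangle
    simp only [Walk.length_cons] at hl
    omega

lemma isPath_concat {u v w : V} {p : G.Walk u v} (hp : p.IsPath) (h : G.Adj v w)
    (hw : w ∉ p.support) : (p.concat h).IsPath := by
  rw [Walk.isPath_def, Walk.support_concat, List.nodup_append]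
  refine ⟨hp.support_nodup, List.nodup_singleton _, ?_⟩
  intro a ha b hb
  simp only [List.mem_singleton] at hb
  subst hb
  rintro rfl; exact hw ha

lemma dist_dichotomy (ht : G.IsTree) {x y : V} (hadj : G.Adj x y) (z : V) :
    G.dist z y = G.dist z x + 1 ∨ G.dist z x = G.dist z y + 1 := by
  have hc := ht.isConnected
  have hxy : G.dist x y = 1 := dist_eq_one_iff_adj.mpr hadj
  have hyx : G.dist y x = 1 := dist_eq_one_iff_adj.mpr hadj.symm
  have t1 : G.dist z y ≤ G.dist z x + 1 := by
    have := hc.dist_triangle (u := z) (v := x) (w := y); omega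
  have t2 : G.dist z x ≤ G.dist z y + 1 := by
    have := hc.dist_triangle (u := z) (v := y) (w := x); omega
  have hne : G.dist z x ≠ G.dist z y := by
    intro he
    obtain ⟨p, hp, hl⟩ := hc.exists_path_of_dist z x
    have hys : y ∉ p.support := by
      intro hy
      have := dist_split hc p hl hy
      have hyx0 : G.dist y x ≠ 0 := by omega
      omega
    have hq : (p.concat hadj).IsPath := isPath_concat hp hadj hys
    have hlen : (p.concat hadj).length = G.dist z y := path_length_eq_dist ht hq
    rw [Walk.length_concat] at hlen
    omega
  omega

lemma parent_unique (ht : G.IsTree) {r u w s : V} (h1 : G.Adj w u) (h2 : G.Adj s u)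
    (hw : G.dist r w + 1 = G.dist r u) (hs : G.dist r s + 1 = G.dist r u) : w = s := by
  have hc := ht.isConnected
  obtain ⟨p, hp, hpl⟩ := hc.exists_path_of_dist r w
  obtain ⟨q, hq, hql⟩ := hc.exists_path_of_dist r s
  have hup : u ∉ p.support := fun hy => by
    have := dist_split hc p hpl hy
    omega
  have huq : u ∉ q.support := fun hy => by
    have := dist_split hc q hql hy
    omega
  have hP : (p.concat h1).IsPath := isPath_concat hp h1 hup
  have hQ : (q.concat h2).IsPath := isPath_concat hq h2 huq
  have he : p.concat h1 = q.concat h2 := path_eq ht hP hQ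
  obtain ⟨hv, -⟩ := Walk.concat_inj he
  exact hv

lemma exists_lca (ht : G.IsTree) (r s t : V) :
    ∃ a, G.dist r a + G.dist a s = G.dist r s ∧ G.dist r a + G.dist a t = G.dist r t ∧
      G.dist s a + G.dist a t = G.dist s t := by
  have hc := ht.isConnected
  suffices H : ∀ n s t, G.dist s t = n →
      ∃ a, G.dist r a + G.dist a s = G.dist r s ∧ G.dist r a + G.dist a t = G.dist r t ∧
        G.dist s a + G.dist a t = G.dist s t by
    exact H _ s t rfl
  intro n
  induction n using Nat.strong_induction_on with
  | _ n IH =>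
    intro s t hst
    rcases eq_or_ne s t with rfl | hne
    · exact ⟨s, by simp [dist_self], by simp [dist_self], by simp [dist_self]⟩
    have hpos : 0 < G.dist s t := hc.pos_dist_of_ne hne
    obtain ⟨u, hadj, hut⟩ := first_step hc hne
    have hsu : G.dist s u = 1 := dist_eq_one_iff_adj.mpr hadj
    have hus : G.dist u s = 1 := dist_eq_one_iff_adj.mpr hadj.symm
    rcases dist_dichotomy ht hadj r with hdown | hup
    · -- depth u = depth s + 1
      obtain ⟨a, ha1, ha2, ha3⟩ := IH (G.dist u t) (by omega) u t rfl
      rcases eq_or_ne a u with rfl | hau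
      · -- then s is the lca
        refine ⟨s, by simp [dist_self], ?_, by simp [dist_self]⟩
        simp only [dist_self, zero_add] at ha1 ha2
        omega
      · exfalso
        have hua : 0 < G.dist u a := hc.pos_dist_of_ne (Ne.symm hau)
        obtain ⟨w, hw1, hw2⟩ := first_step hc (Ne.symm hau)
        -- w: first step from u toward a
        have hwu : G.dist u w = 1 := dist_eq_one_iff_adj.mpr hw1
        have haw : G.dist a w = G.dist w a := dist_comm
        have has : G.dist a s = G.dist s a := dist_comm
        have hau' : G.dist a u = G.dist u a := dist_comm
        rcases dist_dichotomy ht hw1 r with hw3 | hw4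
        · -- depth w = depth u + 1 : contradiction
          have : G.dist r w ≤ G.dist r a + G.dist a w := hc.dist_triangle
          omega
        · -- depth w = depth u - 1, so w = s
          have hws : w = s := parent_unique (r := r) ht hw1.symm hadj (by omega) (by omega)
          have k1 : G.dist s a + 1 = G.dist u a := by rw [← hws]; exact hw2
          have k2 : G.dist s t ≤ G.dist s a + G.dist a t := hc.dist_triangle
          omega
    · -- depth u = depth s - 1
      obtain ⟨a, ha1, ha2, ha3⟩ := IH (G.dist u t) (by omega) u t rfl
      have e1 : G.dist a s ≤ G.dist a u + 1 := by
        have := hc.dist_triangle (u := a) (v := u) (w := s); omega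
      have e2 : G.dist r s ≤ G.dist r a + G.dist a s := hc.dist_triangle
      have has : G.dist a s = G.dist s a := dist_comm
      have hau : G.dist a u = G.dist u a := dist_comm
      refine ⟨a, by omega, ha2, by omega⟩

end BTC

namespace BTC2
open BTC

variable {V : Type} {G : SimpleGraph V}

lemma dist_le_diam' [Fintype V] (hc : G.Connected) (u v : V) : G.dist u v ≤ G.diam := by
  have : Nonempty V := hc.nonempty
  obtain ⟨a, b, hab⟩ := G.exists_edist_eq_ediam_of_finite
  apply dist_le_diam
  rw [← hab]
  exact edist_ne_top_iff_reachable.mpr (hc a b)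

open scoped Classical in
noncomputable def catA [Fintype V] (G : SimpleGraph V) (r v : V) : Finset V :=
  Finset.univ.filter (fun x => G.dist r v + G.dist v x = G.dist r x)

open scoped Classical in
noncomputable def catB [Fintype V] (G : SimpleGraph V) (r a c : V) (j : ℕ) : Finset V :=
  Finset.univ.filter (fun x =>
    (G.Adj a c ∧ G.dist r c = G.dist r a + 1) ∧
    G.dist r a + G.dist a x = G.dist r x ∧
    (G.dist r c + G.dist c x = G.dist r x → G.dist r x ≤ G.dist r a + j))

noncomputable def SS [Fintype V] [DecidableEq V] (G : SimpleGraph V) (r : V) (D : ℕ) : Finset (Finset V) :=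
  (Finset.univ.image (catA G r)) ∪
  ((Finset.univ ×ˢ Finset.univ ×ˢ Finset.range (D + 1)).image
    (fun p => catB G r p.1 p.2.1 p.2.2))

lemma mem_catA [Fintype V] {r v x : V} :
    x ∈ catA G r v ↔ G.dist r v + G.dist v x = G.dist r x := by
  simp [catA]

lemma mem_catB [Fintype V] {r a c x : V} {j : ℕ} :
    x ∈ catB G r a c j ↔
      ((G.Adj a c ∧ G.dist r c = G.dist r a + 1) ∧
       G.dist r a + G.dist a x = G.dist r x ∧
       (G.dist r c + G.dist c x = G.dist r x → G.dist r x ≤ G.dist r a + j)) := by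
  simp [catB]

/-- Step towards the apex inside a category. -/
lemma anc_step (ht : G.IsTree) {r v x : V}
    (hanc : G.dist r v + G.dist v x = G.dist r x) (hxv : x ≠ v) :
    ∃ w, G.Adj x w ∧ G.dist r v + G.dist v w = G.dist r w ∧
      G.dist v w + 1 = G.dist v x ∧ G.dist r w + 1 = G.dist r x := by
  have hc := ht.isConnected
  obtain ⟨w, hadj, hwv⟩ := first_step hc hxv
  have c1 : G.dist w v = G.dist v w := dist_comm
  have c2 : G.dist x v = G.dist v x := dist_comm
  have t1 : G.dist r w ≤ G.dist r v + G.dist v w := hc.dist_triangle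
  rcases dist_dichotomy ht hadj r with h | h
  · exfalso; omega
  · exact ⟨w, hadj, by omega, by omega, by omega⟩

lemma preconn_of_apex {s : Set V} {v : V} (hv : v ∈ s)
    (H : ∀ x ∈ s, x ≠ v → ∃ w, G.Adj x w ∧ w ∈ s ∧ G.dist v w + 1 = G.dist v x) :
    (G.induce s).Preconnected := by
  have key : ∀ n (x : V) (hx : x ∈ s), G.dist v x = n →
      (G.induce s).Reachable ⟨x, hx⟩ ⟨v, hv⟩ := by
    intro n
    induction n using Nat.strong_induction_on with
    | _ n IH =>
      intro x hx hdx
      rcases eq_or_ne x v with rfl | hxv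
      · exact Reachable.refl _
      · obtain ⟨w, hadj, hws, hdw⟩ := H x hx hxv
        have hreach : (G.induce s).Reachable ⟨w, hws⟩ ⟨v, hv⟩ :=
          IH (G.dist v w) (by omega) w hws rfl
        have hadj' : (G.induce s).Adj ⟨x, hx⟩ ⟨w, hws⟩ := by
          simpa using hadj
        exact hadj'.reachable.trans hreach
  rintro ⟨x, hx⟩ ⟨y, hy⟩
  exact (key _ x hx rfl).trans (key _ y hy rfl).symm

lemma preconn_catA [Fintype V] (ht : G.IsTree) (r v : V) :
    (G.induce ((catA G r v : Finset V) : Set V)).Preconnected := by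
  have hv : v ∈ catA G r v := mem_catA.mpr (by simp [dist_self])
  apply preconn_of_apex (v := v) (by exact_mod_cast hv)
  intro x hx hxv
  have hx' : G.dist r v + G.dist v x = G.dist r x := mem_catA.mp (by exact_mod_cast hx)
  obtain ⟨w, hadj, hw1, hw2, hw3⟩ := anc_step ht hx' hxv
  exact ⟨w, hadj, by exact_mod_cast mem_catA.mpr hw1, hw2⟩

lemma preconn_catB [Fintype V] (ht : G.IsTree) (r a c : V) (j : ℕ) :
    (G.induce ((catB G r a c j : Finset V) : Set V)).Preconnected := by
  rcases Finset.eq_empty_or_nonempty (catB G r a c j) with he | ⟨x0, hx0⟩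
  · rw [he]
    rintro ⟨x, hx⟩
    simp at hx
  · obtain ⟨⟨hadj0, hch0⟩, -, -⟩ := mem_catB.mp hx0
    have ha : a ∈ catB G r a c j := by
      refine mem_catB.mpr ⟨⟨hadj0, hch0⟩, by simp [dist_self], fun _ => Nat.le_add_right _ _⟩
    apply preconn_of_apex (v := a) (by exact_mod_cast ha)
    intro x hx hxa
    obtain ⟨⟨h1, h2⟩, h3, h4⟩ := mem_catB.mp (by exact_mod_cast hx : x ∈ catB G r a c j)
    obtain ⟨w, hadj, hw1, hw2, hw3⟩ := anc_step ht h3 hxa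
    refine ⟨w, hadj, ?_, hw2⟩
    have hmem : w ∈ catB G r a c j := by
      refine mem_catB.mpr ⟨⟨h1, h2⟩, hw1, ?_⟩
      intro hcw
      have hcx : G.dist r c + G.dist c x = G.dist r x := by
        have t1 : G.dist c x ≤ G.dist c w + 1 := by
          have := ht.isConnected.dist_triangle (u := c) (v := w) (w := x)
          have hwx : G.dist w x = 1 := dist_eq_one_iff_adj.mpr hadj.symm
          omega
        have t2 : G.dist r x ≤ G.dist r c + G.dist c x := ht.isConnected.dist_triangle
        omega
      have := h4 hcx
      omega
    exact_mod_cast hmem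

open scoped Classical in
lemma card_anc [Fintype V] (ht : G.IsTree) (r x : V) :
    (Finset.univ.filter (fun a => G.dist r a + G.dist a x = G.dist r x)).card
      ≤ G.dist r x + 1 := by
  obtain ⟨p, hp, hl⟩ := ht.isConnected.exists_path_of_dist r x
  have hsub : (Finset.univ.filter (fun a => G.dist r a + G.dist a x = G.dist r x))
      ⊆ p.support.toFinset := by
    intro a ha
    rw [List.mem_toFinset]
    exact mem_support_of_dist ht (Finset.mem_filter.mp ha).2 hp
  calc (Finset.univ.filter (fun a => G.dist r a + G.dist a x = G.dist r x)).card
      ≤ p.support.toFinset.card := Finset.card_le_card hsub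
    _ ≤ p.support.length := p.support.toFinset_card_le
    _ = p.length + 1 := p.length_support
    _ = G.dist r x + 1 := by rw [hl]

open scoped Classical in
lemma card_children [Fintype V] [DecidableRel G.Adj] (ht : G.IsTree) {r a : V}
    (hdeg2 : a = r → G.degree a ≤ 2) (hdeg3 : a ≠ r → G.degree a ≤ 3) :
    (Finset.univ.filter (fun c => G.Adj a c ∧ G.dist r c = G.dist r a + 1)).card ≤ 2 := by
  have hc := ht.isConnected
  rcases eq_or_ne a r with rfl | hne
  · have hsub : (Finset.univ.filter (fun c => G.Adj a c ∧ G.dist a c = G.dist a a + 1))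
        ⊆ G.neighborFinset a := by
      intro cc hcc
      rw [SimpleGraph.mem_neighborFinset]
      exact (Finset.mem_filter.mp hcc).2.1
    calc _ ≤ (G.neighborFinset a).card := Finset.card_le_card hsub
      _ ≤ 2 := by rw [← SimpleGraph.card_neighborFinset_eq_degree] at *; exact hdeg2 rfl
  · obtain ⟨w, hadj, hwr⟩ := first_step hc hne
    have hpos : 0 < G.dist a r := hc.pos_dist_of_ne hne
    have c1 : G.dist w r = G.dist r w := dist_comm
    have c2 : G.dist a r = G.dist r a := dist_comm
    have hsub : (Finset.univ.filter (fun c => G.Adj a c ∧ G.dist r c = G.dist r a + 1))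
        ⊆ G.neighborFinset a \ {w} := by
      intro cc hcc
      obtain ⟨-, hadjc, hd⟩ := Finset.mem_filter.mp hcc
      rw [Finset.mem_sdiff, SimpleGraph.mem_neighborFinset, Finset.mem_singleton]
      exact ⟨hadjc, fun he => by subst he; omega⟩
    have hwmem : {w} ⊆ G.neighborFinset a := by
      simp [SimpleGraph.mem_neighborFinset, hadj]
    calc _ ≤ (G.neighborFinset a \ {w}).card := Finset.card_le_card hsub
      _ = G.degree a - 1 := by
          rw [Finset.card_sdiff_of_subset hwmem, SimpleGraph.card_neighborFinset_eq_degree,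
            Finset.card_singleton]
      _ ≤ 2 := by have := hdeg3 hne; omega

end BTC2

/-- For every finite binary tree (a tree having a vertex `r` of degree at
most 2 such that all other vertices have degree at most 3, i.e. at most two children
after rooting at `r`), there is a shattered and internally connected category system
with membership dimension `O(diam(G)^2)`: at most `c * (diam(G)+1)^2` for an absolute
constant `c`. -/
theorem binary_tree_categories :
    ∃ c : ℕ, ∀ (V : Type) (_ : Fintype V) (_ : DecidableEq V) (G : SimpleGraph V)
      (_ : DecidableRel G.Adj),
      G.IsTree →
      (∃ r : V, G.degree r ≤ 2 ∧ ∀ v : V, v ≠ r → G.degree v ≤ 3) →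
      ∃ S : Finset (Finset V),
        Shattered G S ∧ InternallyConnected G S ∧
          memdim S ≤ c * (G.diam + 1) ^ 2 := by
  classical
  refine ⟨3, ?_⟩
  intro V iF iD G iR ht hex
  letI := iF; letI := iD; letI := iR
  obtain ⟨r, hr2, hr3⟩ := hex
  have hc := ht.isConnected
  set D := G.diam with hD
  refine ⟨BTC2.SS G r D, ?_, ?_, ?_⟩
  · -- Shattered
    intro s t hst
    by_cases hanc : G.dist r s + G.dist s t = G.dist r t
    · -- t is in the subtree of s: use a type-A category
      obtain ⟨c, hadj, hct⟩ := BTC.first_step hc hst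
      have dcs : G.dist c s = 1 := SimpleGraph.dist_eq_one_iff_adj.mpr hadj.symm
      have tri : G.dist r t ≤ G.dist r c + G.dist c t := hc.dist_triangle
      refine ⟨c, hadj, BTC2.catA G r c, ?_, ?_, ?_, ?_⟩
      · exact Finset.mem_union_left _ (Finset.mem_image_of_mem _ (Finset.mem_univ c))
      · exact BTC2.mem_catA.mpr (by simp [SimpleGraph.dist_self])
      · refine BTC2.mem_catA.mpr ?_
        rcases BTC.dist_dichotomy ht hadj r with h | h <;> omega
      · intro habs
        have habs' := BTC2.mem_catA.mp habs
        rcases BTC.dist_dichotomy ht hadj r with h | h <;> omega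
    · -- t is not below s: use a type-B category at the lca
      obtain ⟨a, hlca1, hlca2, hlca3⟩ := BTC.exists_lca ht r s t
      have has : a ≠ s := fun he => hanc (by subst he; exact hlca2)
      have hspos : 0 < G.dist a s := hc.pos_dist_of_ne (Ne.symm (fun h => has h.symm))
      obtain ⟨c, hac, hcs⟩ := BTC.first_step hc has
      obtain ⟨u, hsu, hua⟩ := BTC.first_step hc (Ne.symm has)
      have cas : G.dist a s = G.dist s a := SimpleGraph.dist_comm
      have cau : G.dist a u = G.dist u a := SimpleGraph.dist_comm
      have ccs : G.dist s c = G.dist c s := SimpleGraph.dist_comm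
      have hchild : G.dist r c = G.dist r a + 1 := by
        have tri : G.dist r s ≤ G.dist r c + G.dist c s := hc.dist_triangle
        rcases BTC.dist_dichotomy ht hac r with h | h
        · exact h
        · exfalso; omega
      have hancc : G.dist r c + G.dist c s = G.dist r s := by omega
      have hancu : G.dist r a + G.dist a u = G.dist r u := by
        have tri : G.dist r u ≤ G.dist r a + G.dist a u := hc.dist_triangle
        rcases BTC.dist_dichotomy ht hsu r with h | h
        · exfalso; omega
        · omega
      have hdu : G.dist r u + 1 = G.dist r s := by
        rcases BTC.dist_dichotomy ht hsu r with h | h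
        · exfalso
          have tri : G.dist r u ≤ G.dist r a + G.dist a u := hc.dist_triangle
          omega
        · omega
      refine ⟨u, hsu, BTC2.catB G r a c (G.dist a s - 1), ?_, ?_, ?_, ?_⟩
      · refine Finset.mem_union_right _ (Finset.mem_image.mpr ⟨(a, (c, G.dist a s - 1)), ?_, rfl⟩)
        refine Finset.mem_product.mpr ⟨Finset.mem_univ _, Finset.mem_product.mpr
          ⟨Finset.mem_univ _, Finset.mem_range.mpr ?_⟩⟩
        show G.dist a s - 1 < D + 1
        have h1 := BTC2.dist_le_diam' hc a s
        rw [← hD] at h1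
        omega
      · exact BTC2.mem_catB.mpr ⟨⟨hac, hchild⟩, hancu, fun _ => by omega⟩
      · refine BTC2.mem_catB.mpr ⟨⟨hac, hchild⟩, hlca2, ?_⟩
        intro hct
        exfalso
        have trist : G.dist s t ≤ G.dist s c + G.dist c t := hc.dist_triangle
        omega
      · intro habs
        obtain ⟨-, -, himp⟩ := BTC2.mem_catB.mp habs
        have := himp hancc
        omega
  · -- Internally connected
    intro C hCmem
    rcases Finset.mem_union.mp hCmem with h | h
    · obtain ⟨v, -, rfl⟩ := Finset.mem_image.mp h
      exact BTC2.preconn_catA ht r v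
    · obtain ⟨⟨a, c, j⟩, -, rfl⟩ := Finset.mem_image.mp h
      exact BTC2.preconn_catB ht r a c j
  · -- membership dimension
    unfold memdim
    apply Finset.sup_le
    intro x _
    unfold cat BTC2.SS
    rw [Finset.filter_union]
    refine le_trans (Finset.card_union_le _ _) ?_
    have hdx : G.dist r x ≤ D := BTC2.dist_le_diam' hc r x
    have part1 : ((Finset.univ.image (BTC2.catA G r)).filter (fun C => x ∈ C)).card ≤ D + 1 := by
      rw [Finset.filter_image]
      refine le_trans (Finset.card_image_le) ?_
      have heq : (Finset.univ.filter fun v => x ∈ BTC2.catA G r v) =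
          (Finset.univ.filter fun v => G.dist r v + G.dist v x = G.dist r x) := by
        apply Finset.filter_congr
        intro v _
        simp [BTC2.mem_catA]
      rw [heq]
      have := BTC2.card_anc ht r x
      omega
    have part2 : (((Finset.univ ×ˢ Finset.univ ×ˢ Finset.range (D + 1)).image
        (fun p => BTC2.catB G r p.1 p.2.1 p.2.2)).filter (fun C => x ∈ C)).card
        ≤ (D + 1) * (2 * (D + 1)) := by
      rw [Finset.filter_image]
      refine le_trans (Finset.card_image_le) ?_
      have hsub : ((Finset.univ ×ˢ Finset.univ ×ˢ Finset.range (D + 1)).filter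
          (fun p => x ∈ BTC2.catB G r p.1 p.2.1 p.2.2)) ⊆
          (Finset.univ.filter (fun a => G.dist r a + G.dist a x = G.dist r x)).biUnion
            (fun a => {a} ×ˢ ((Finset.univ.filter
              (fun c => G.Adj a c ∧ G.dist r c = G.dist r a + 1)) ×ˢ Finset.range (D + 1))) := by
        rintro ⟨a, c, j⟩ hp
        obtain ⟨hmem, hxB⟩ := Finset.mem_filter.mp hp
        obtain ⟨⟨hadj, hch⟩, hancax, -⟩ := BTC2.mem_catB.mp hxB
        obtain ⟨-, hmem2⟩ := Finset.mem_product.mp hmem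
        obtain ⟨-, hj⟩ := Finset.mem_product.mp hmem2
        refine Finset.mem_biUnion.mpr ⟨a, Finset.mem_filter.mpr ⟨Finset.mem_univ _, hancax⟩, ?_⟩
        refine Finset.mem_product.mpr ⟨Finset.mem_singleton_self _, Finset.mem_product.mpr
          ⟨Finset.mem_filter.mpr ⟨Finset.mem_univ _, hadj, hch⟩, hj⟩⟩
      refine le_trans (Finset.card_le_card hsub) ?_
      refine le_trans (Finset.card_biUnion_le) ?_
      have hbound : ∀ a ∈ (Finset.univ.filter
          (fun a => G.dist r a + G.dist a x = G.dist r x)),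
          ({a} ×ˢ ((Finset.univ.filter
            (fun c => G.Adj a c ∧ G.dist r c = G.dist r a + 1)) ×ˢ Finset.range (D + 1))).card
            ≤ 2 * (D + 1) := by
        intro a _
        rw [Finset.card_product, Finset.card_product, Finset.card_singleton,
          Finset.card_range, one_mul]
        have := BTC2.card_children ht (r := r) (a := a)
          (fun he => he ▸ hr2) (fun hne => hr3 a hne)
        exact Nat.mul_le_mul this le_rfl
      refine le_trans (Finset.sum_le_sum hbound) ?_
      rw [Finset.sum_const, smul_eq_mul]
      have hcard := BTC2.card_anc ht r x
      have : (Finset.univ.filter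
          (fun a => G.dist r a + G.dist a x = G.dist r x)).card ≤ D + 1 := by omega
      exact Nat.mul_le_mul this le_rfl
    calc ((Finset.univ.image (BTC2.catA G r)).filter (fun C => x ∈ C)).card +
          (((Finset.univ ×ˢ Finset.univ ×ˢ Finset.range (D + 1)).image
            (fun p => BTC2.catB G r p.1 p.2.1 p.2.2)).filter (fun C => x ∈ C)).card
        ≤ (D + 1) + (D + 1) * (2 * (D + 1)) := Nat.add_le_add part1 part2
      _ = (D + 1) + 2 * (D + 1) ^ 2 := by ring
      _ ≤ (D + 1) ^ 2 + 2 * (D + 1) ^ 2 := by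
          have : D + 1 ≤ (D + 1) ^ 2 := Nat.le_self_pow (by norm_num) _
          omega
      _ = 3 * (D + 1) ^ 2 := by ring
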